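/- Let |ψ⟩ and |φ⟩ be unit vectors in a Hilbert space and suppose that measuring each in some fixed orthonormal basis yields outcome sets F_ψ and F_φ, with disjoint correct-answer supports, each with probability at least 1−ε (0 ≤ ε ≤ 1/2). Then |⟨ψ|φ⟩| ≤ 2√(ε(1−ε)). -/

import Mathlib

open scoped BigOperators

lemma aux_sqrt_bound (ε s t : ℝ) (hε0 : 0 ≤ ε) (hε1 : ε ≤ 1/2)
    (hs : 1 - ε ≤ s) (hs1 : s ≤ 1) (ht0 : 0 ≤ t) (ht : t ≤ ε) :
    Real.sqrt s * Real.sqrt t + Real.sqrt (1-s) * Real.sqrt (1-t)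
      ≤ 2 * Real.sqrt (ε * (1-ε)) := by
  have hs0 : 0 ≤ s := by linarith
  have h1s : 0 ≤ 1 - s := by linarith
  have h1t : 0 ≤ 1 - t := by linarith
  have hE : 0 ≤ ε * (1-ε) := by nlinarith
  set a := Real.sqrt s
  set b := Real.sqrt t
  set c := Real.sqrt (1-s)
  set d := Real.sqrt (1-t)
  set R := Real.sqrt (ε * (1-ε))
  have ha2 : a^2 = s := Real.sq_sqrt hs0
  have hb2 : b^2 = t := Real.sq_sqrt ht0
  have hc2 : c^2 = 1-s := Real.sq_sqrt h1s
  have hd2 : d^2 = 1-t := Real.sq_sqrt h1t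
  have hR2 : R^2 = ε * (1-ε) := Real.sq_sqrt hE
  have ha0 : 0 ≤ a := Real.sqrt_nonneg _
  have hb0 : 0 ≤ b := Real.sqrt_nonneg _
  have hc0 : 0 ≤ c := Real.sqrt_nonneg _
  have hd0 : 0 ≤ d := Real.sqrt_nonneg _
  have hR0 : 0 ≤ R := Real.sqrt_nonneg _
  have key : (a*b + c*d)^2 ≤ (2*R)^2 := by
    have h1 : (a*b + c*d)^2 ≤ (s + (1-t)) * (t + (1-s)) := by
      nlinarith [sq_nonneg (a*c - b*d)]
    have h2 : (s + (1-t)) * (t + (1-s)) ≤ 4 * (ε * (1-ε)) := by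
      nlinarith [mul_nonneg (show (0:ℝ) ≤ s - t - (1 - 2*ε) by linarith)
        (show (0:ℝ) ≤ s - t + (1 - 2*ε) by linarith)]
    calc (a*b + c*d)^2 ≤ (s + (1-t)) * (t + (1-s)) := h1
      _ ≤ 4 * (ε * (1-ε)) := h2
      _ = (2*R)^2 := by rw [mul_pow]; rw [hR2]; ring
  have hab : 0 ≤ a*b + c*d := by positivity
  nlinarith [key]

theorem almost_orthogonal_of_distinguishable
    {H : Type*} [NormedAddCommGroup H] [InnerProductSpace ℂ H] [CompleteSpace H]
    {ι : Type*} [Fintype ι] (P : ι → H →L[ℂ] H)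
    (hproj : ∀ i, IsIdempotentElem (P i)) (hsa : ∀ i, IsSelfAdjoint (P i))
    (hsum : ∑ i, P i = 1)
    (A B : Finset ι) (hdisj : Disjoint A B)
    (ε : ℝ) (hε0 : 0 ≤ ε) (hε1 : ε ≤ 1 / 2)
    (ψ φ : H) (hψ : ‖ψ‖ = 1) (hφ : ‖φ‖ = 1)
    (hA : 1 - ε ≤ ∑ i ∈ A, ‖P i ψ‖ ^ 2)
    (hB : 1 - ε ≤ ∑ i ∈ B, ‖P i φ‖ ^ 2) :
    ‖(inner ℂ ψ φ : ℂ)‖ ≤ 2 * Real.sqrt (ε * (1 - ε)) := by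
  -- basic inner ℂ product manipulation
  classical
  have hinner : ∀ (x y : H) i, (inner ℂ x (P i y) : ℂ) = inner ℂ (P i x) (P i y) := by
    intro x y i
    calc (inner ℂ x (P i y) : ℂ) = inner ℂ x (P i (P i y)) := by
          rw [← ContinuousLinearMap.mul_apply, (hproj i).eq]
      _ = inner ℂ (ContinuousLinearMap.adjoint (P i) x) (P i y) :=
          (ContinuousLinearMap.adjoint_inner_left _ _ _).symm
      _ = inner ℂ (P i x) (P i y) := by rw [(hsa i).adjoint_eq]
  -- sum of squared norms equals squared norm
  have hnorm : ∀ x : H, ∑ i, ‖P i x‖ ^ 2 = ‖x‖ ^ 2 := by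
    intro x
    have h1 : (inner ℂ x x : ℂ) = ∑ i, (inner ℂ (P i x) (P i x) : ℂ) := by
      have hx : (inner ℂ x x : ℂ) = inner ℂ x ((∑ i, P i) x) := by rw [hsum]; rfl
      rw [hx, ContinuousLinearMap.sum_apply, inner_sum]
      exact Finset.sum_congr rfl fun i _ => hinner x x i
    have h2 := congrArg (RCLike.re (K := ℂ)) h1
    rw [inner_self_eq_norm_sq, map_sum] at h2
    rw [h2]
    exact Finset.sum_congr rfl fun i _ => (inner_self_eq_norm_sq _).symm
  -- bound on inner ℂ product
  have hbound : ‖(inner ℂ ψ φ : ℂ)‖ ≤ ∑ i, ‖P i ψ‖ * ‖P i φ‖ := by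
    have h1 : (inner ℂ ψ φ : ℂ) = ∑ i, (inner ℂ (P i ψ) (P i φ) : ℂ) := by
      have hx : (inner ℂ ψ φ : ℂ) = inner ℂ ψ ((∑ i, P i) φ) := by rw [hsum]; rfl
      rw [hx, ContinuousLinearMap.sum_apply, inner_sum]
      exact Finset.sum_congr rfl fun i _ => hinner ψ φ i
    rw [h1]
    refine (norm_sum_le _ _).trans (Finset.sum_le_sum fun i _ => ?_)
    exact norm_inner_le_norm _ _
  set a : ι → ℝ := fun i => ‖P i ψ‖
  set b : ι → ℝ := fun i => ‖P i φ‖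
  have hna : ∑ i, a i ^ 2 = 1 := by rw [hnorm ψ, hψ]; norm_num
  have hnb : ∑ i, b i ^ 2 = 1 := by rw [hnorm φ, hφ]; norm_num
  set s : ℝ := ∑ i ∈ A, a i ^ 2
  set t : ℝ := ∑ i ∈ A, b i ^ 2
  have hsplit' : ∀ f : ι → ℝ, ∑ i ∈ A, f i + ∑ i ∈ Finset.univ \ A, f i = ∑ i, f i := by
    intro f
    rw [add_comm, Finset.sum_sdiff (Finset.subset_univ A)]
  have hcompa : ∑ i ∈ Finset.univ \ A, a i ^ 2 = 1 - s := by
    have := hsplit' (fun i => a i ^ 2); linarith [hna]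
  have hcompb : ∑ i ∈ Finset.univ \ A, b i ^ 2 = 1 - t := by
    have := hsplit' (fun i => b i ^ 2); linarith [hnb]
  have hs1 : s ≤ 1 := by
    rw [← hna]
    exact Finset.sum_le_sum_of_subset_of_nonneg (Finset.subset_univ A)
      (fun i _ _ => sq_nonneg _)
  have ht0 : 0 ≤ t := Finset.sum_nonneg fun i _ => sq_nonneg _
  have hs : 1 - ε ≤ s := hA
  have ht : t ≤ ε := by
    have hAB : ∑ i ∈ A ∪ B, b i ^ 2 ≤ 1 := by
      rw [← hnb]
      exact Finset.sum_le_sum_of_subset_of_nonneg (Finset.subset_univ _)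
        (fun i _ _ => sq_nonneg _)
    rw [Finset.sum_union hdisj] at hAB
    linarith [hB]
  -- Cauchy-Schwarz on A and its complement
  have csA : ∑ i ∈ A, a i * b i ≤ Real.sqrt s * Real.sqrt t := by
    have := Real.sum_mul_le_sqrt_mul_sqrt A a b
    exact this
  have csA' : ∑ i ∈ Finset.univ \ A, a i * b i ≤ Real.sqrt (1-s) * Real.sqrt (1-t) := by
    have := Real.sum_mul_le_sqrt_mul_sqrt (Finset.univ \ A) a b
    rwa [hcompa, hcompb] at this
  have htotal : ∑ i, a i * b i ≤ Real.sqrt s * Real.sqrt t + Real.sqrt (1-s) * Real.sqrt (1-t) := by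
    rw [← hsplit' (fun i => a i * b i)]
    exact add_le_add csA csA'
  calc ‖(inner ℂ ψ φ : ℂ)‖ ≤ ∑ i, a i * b i := hbound
    _ ≤ Real.sqrt s * Real.sqrt t + Real.sqrt (1-s) * Real.sqrt (1-t) := htotal
    _ ≤ 2 * Real.sqrt (ε * (1-ε)) := aux_sqrt_bound ε s t hε0 hε1 hs hs1 ht0 ht
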